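/- Let f : Σ_2 → Σ_2 be defined by f(x)(i) = x(i) + x(i+1) (mod 2), and let k be an odd positive integer. Then exactly 2^{k-1} of the 2^k points x with σ^k(x) = x are periodic under f. -/

import Mathlib

/-- The shift map on the full shift `ℤ → A`. -/
def shift {A : Type*} (x : ℤ → A) : ℤ → A := fun i => x (i + 1)

/-- The addition cellular automaton `x ↦ x + σ x` on the 2-shift. -/
def addCA (x : ℤ → ZMod 2) : ℤ → ZMod 2 := fun i => x i + x (i + 1)

namespace Stmt10Aux

lemma shift_iter (n : ℕ) (x : ℤ → ZMod 2) (i : ℤ) :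
    shift^[n] x i = x (i + n) := by
  induction n generalizing x i with
  | zero => simp
  | succ n ih =>
    rw [Function.iterate_succ_apply, ih]
    show x (i + n + 1) = x (i + (n + 1 : ℕ))
    congr 1
    push_cast
    ring

lemma mem_S_iff (k : ℕ) (x : ℤ → ZMod 2) :
    shift^[k] x = x ↔ ∀ i, x (i + k) = x i := by
  constructor
  · intro h i
    conv_rhs => rw [← h]
    rw [shift_iter]
  · intro h
    funext i
    rw [shift_iter, h]

lemma comm_shift_addCA : Function.Commute shift addCA := fun _ => rfl

/-- addCA preserves the set of σ^k-fixed points. -/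
lemma addCA_iter_fixed (k p : ℕ) (x : ℤ → ZMod 2) (hx : shift^[k] x = x) :
    shift^[k] (addCA^[p] x) = addCA^[p] x := by
  have h := ((comm_shift_addCA.iterate_left k).iterate_right p) x
  rw [h, hx]

lemma per_all (k : ℕ) (x : ℤ → ZMod 2) (h : ∀ i, x (i + k) = x i) :
    ∀ (n : ℤ) (i : ℤ), x (i + n * k) = x i := by
  intro n
  induction n using Int.induction_on with
  | zero => simp
  | succ n ih =>
    intro i
    rw [show i + ((n : ℤ) + 1) * k = (i + n * k) + k by ring, h, ih]
  | pred n ih =>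
    intro i
    have h2 := h (i + (-(n : ℤ) - 1) * k)
    rw [show i + (-(n : ℤ) - 1) * k + k = i + (-(n : ℤ)) * k by ring, ih] at h2
    exact h2.symm

lemma per_congr (k : ℕ) (hk : 0 < k) (x : ℤ → ZMod 2)
    (h : ∀ i, x (i + k) = x i) (i : ℤ) : x i = x (i % k) := by
  have := per_all k x h (i / k) (i % (k : ℤ))
  rw [Int.emod_add_ediv_mul i (k : ℤ)] at this
  exact this

/-- The sum of `addCA x` over a period vanishes. -/
lemma sum_addCA (k : ℕ) (x : ℤ → ZMod 2) (h : ∀ i, x (i + k) = x i) :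
    ∑ i ∈ Finset.range k, addCA x (i : ℤ) = 0 := by
  have hsplit : ∑ i ∈ Finset.range k, addCA x (i : ℤ)
      = (∑ i ∈ Finset.range k, x (i : ℤ)) + ∑ i ∈ Finset.range k, x ((i : ℤ) + 1) := by
    rw [← Finset.sum_add_distrib]
    rfl
  have hA : ∑ i ∈ Finset.range k, x ((i : ℤ) + 1) = ∑ i ∈ Finset.range k, x (i : ℤ) := by
    have h1 : ∑ i ∈ Finset.range (k + 1), x (i : ℤ)
        = (∑ i ∈ Finset.range k, x ((i : ℤ) + 1)) + x 0 := by
      rw [Finset.sum_range_succ']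
      congr 1
    have h2 : ∑ i ∈ Finset.range (k + 1), x (i : ℤ)
        = (∑ i ∈ Finset.range k, x (i : ℤ)) + x 0 := by
      rw [Finset.sum_range_succ]
      congr 1
      have := h 0
      simpa using this
    have := h1.symm.trans h2
    exact add_right_cancel this
  rw [hsplit, hA]
  generalize (∑ i ∈ Finset.range k, x (i : ℤ)) = s
  revert s
  decide

lemma zmod2_cancel (a b c d : ZMod 2) (h : a + b = c + d) : b + d = a + c := by
  revert h
  revert a b c d
  decide

lemma zmod2_add_self (a : ZMod 2) : a + a = 0 := by revert a; decide

lemma zmod2_eq_of_add (a b : ZMod 2) (h : a + b = 0) : a = b := by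
  revert h; revert a b; decide

/-- Injectivity of addCA on the zero-sum σ^k-periodic points, for odd k. -/
lemma addCA_injOn (k : ℕ) (hk : 0 < k) (hodd : Odd k) (x y : ℤ → ZMod 2)
    (hx : ∀ i, x (i + k) = x i) (hy : ∀ i, y (i + k) = y i)
    (hsx : ∑ i ∈ Finset.range k, x (i : ℤ) = 0)
    (hsy : ∑ i ∈ Finset.range k, y (i : ℤ) = 0)
    (h : addCA x = addCA y) : x = y := by
  set z : ℤ → ZMod 2 := fun i => x i + y i with hz
  have hstep : ∀ i, z (i + 1) = z i := by
    intro i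
    have h' := congrFun h i
    simp only [addCA] at h'
    exact zmod2_cancel _ _ _ _ h'
  have hconst : ∀ i, z i = z 0 := by
    intro i
    induction i using Int.induction_on with
    | zero => rfl
    | succ n ih => rw [hstep, ih]
    | pred n ih =>
      have := hstep (-(n : ℤ) - 1)
      rw [show (-(n : ℤ) - 1) + 1 = -(n : ℤ) by ring] at this
      rw [← this]
      exact ih
  have hsz : ∑ i ∈ Finset.range k, z (i : ℤ) = 0 := by
    simp only [hz]
    rw [Finset.sum_add_distrib, hsx, hsy, add_zero]
  have hsz2 : ∑ i ∈ Finset.range k, z (i : ℤ) = z 0 := by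
    have hc : ∀ i ∈ Finset.range k, z (i : ℤ) = z 0 := fun i _ => hconst _
    rw [Finset.sum_congr rfl hc, Finset.sum_const, Finset.card_range]
    have hk2 : (k : ZMod 2) = 1 := by
      obtain ⟨m, rfl⟩ := hodd
      push_cast
      rw [show (2 : ZMod 2) = 0 by decide]
      ring
    rw [nsmul_eq_mul, hk2, one_mul]
  have hz0 : z 0 = 0 := by rw [← hsz2, hsz]
  funext i
  have hzi : z i = 0 := by rw [hconst i, hz0]
  exact zmod2_eq_of_add _ _ hzi

/-- Periodic extension of a function on `Fin k` to `ℤ`. -/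
def extend (k : ℕ) (hk : 0 < k) (y : Fin k → ZMod 2) : ℤ → ZMod 2 :=
  fun i => y ⟨(i % (k : ℤ)).toNat, by
    have h1 : 0 ≤ i % (k : ℤ) := Int.emod_nonneg i (by exact_mod_cast hk.ne')
    have h2 : i % (k : ℤ) < k := Int.emod_lt_of_pos i (by exact_mod_cast hk)
    omega⟩

lemma extend_periodic (k : ℕ) (hk : 0 < k) (y : Fin k → ZMod 2) (i : ℤ) :
    extend k hk y (i + k) = extend k hk y i := by
  unfold extend
  congr 2
  rw [show i + (k : ℤ) = i + (k : ℤ) * 1 by ring, Int.add_mul_emod_self_left]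

lemma extend_res (k : ℕ) (hk : 0 < k) (y : Fin k → ZMod 2) (j : Fin k) :
    extend k hk y ((j : ℕ) : ℤ) = y j := by
  unfold extend
  congr 1
  apply Fin.ext
  show (((j : ℕ) : ℤ) % (k : ℤ)).toNat = (j : ℕ)
  have hj := j.2
  rw [Int.emod_eq_of_lt (by positivity) (by exact_mod_cast hj)]
  omega

end Stmt10Aux

open Stmt10Aux in
theorem stmt10 (k : ℕ) (hk : 1 ≤ k) (hodd : Odd k) :
    ({x : ℤ → ZMod 2 | shift^[k] x = x ∧ ∃ p, 1 ≤ p ∧ addCA^[p] x = x}).ncard =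
      2 ^ (k - 1) := by
  have hk0 : 0 < k := hk
  set T : Set (ℤ → ZMod 2) :=
    {x | shift^[k] x = x ∧ ∑ i ∈ Finset.range k, x (i : ℤ) = 0} with hT
  -- addCA maps T to T
  have hmaps : Set.MapsTo addCA T T := by
    rintro x ⟨h1, h2⟩
    refine ⟨addCA_iter_fixed k 1 x h1, ?_⟩
    exact sum_addCA k x ((mem_S_iff k x).1 h1)
  -- addCA is injective on T
  have hinj : Set.InjOn addCA T := by
    rintro x ⟨hx1, hx2⟩ y ⟨hy1, hy2⟩ h
    exact addCA_injOn k hk0 hodd x y ((mem_S_iff k x).1 hx1) ((mem_S_iff k y).1 hy1) hx2 hy2 h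
  -- the restriction map to Fin k and its bijectivity onto U
  set U : Set (Fin k → ZMod 2) := {y | ∑ j, y j = 0} with hU
  set res : (ℤ → ZMod 2) → (Fin k → ZMod 2) := fun x j => x ((j : ℕ) : ℤ) with hres
  have hsum_eq : ∀ x : ℤ → ZMod 2,
      ∑ j : Fin k, x ((j : ℕ) : ℤ) = ∑ i ∈ Finset.range k, x (i : ℤ) :=
    fun x => Fin.sum_univ_eq_sum_range (fun i => x (i : ℤ)) k
  have hbij : Set.BijOn res T U := by
    refine ⟨?_, ?_, ?_⟩
    · rintro x ⟨h1, h2⟩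
      show ∑ j : Fin k, x ((j : ℕ) : ℤ) = 0
      rw [hsum_eq, h2]
    · rintro x ⟨hx1, hx2⟩ y ⟨hy1, hy2⟩ h
      funext i
      have hxp := (mem_S_iff k x).1 hx1
      have hyp := (mem_S_iff k y).1 hy1
      have hlt : (i % (k : ℤ)).toNat < k := by
        have h1 : 0 ≤ i % (k : ℤ) := Int.emod_nonneg i (by exact_mod_cast hk0.ne')
        have h2 : i % (k : ℤ) < k := Int.emod_lt_of_pos i (by exact_mod_cast hk0)
        omega
      have hval : (((i % (k : ℤ)).toNat : ℕ) : ℤ) = i % (k : ℤ) := by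
        have h1 : 0 ≤ i % (k : ℤ) := Int.emod_nonneg i (by exact_mod_cast hk0.ne')
        omega
      have hj := congrFun h (⟨(i % (k : ℤ)).toNat, hlt⟩ : Fin k)
      simp only [hres] at hj
      rw [per_congr k hk0 x hxp i, per_congr k hk0 y hyp i, ← hval]
      exact hj
    · rintro y hy
      refine ⟨extend k hk0 y, ⟨?_, ?_⟩, ?_⟩
      · rw [mem_S_iff]
        exact extend_periodic k hk0 y
      · rw [← hsum_eq]
        have : ∀ j : Fin k, extend k hk0 y ((j : ℕ) : ℤ) = y j := extend_res k hk0 y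
        rw [Finset.sum_congr rfl (fun j _ => this j)]
        exact hy
      · funext j
        exact extend_res k hk0 y j
  -- T is finite
  have hTfin : T.Finite := by
    apply Set.Finite.of_finite_image _ hbij.injOn
    rw [hbij.image_eq]
    exact Set.toFinite U
  -- the theorem's set equals T
  have hset : {x : ℤ → ZMod 2 | shift^[k] x = x ∧ ∃ p, 1 ≤ p ∧ addCA^[p] x = x} = T := by
    ext x
    simp only [Set.mem_setOf_eq, hT]
    constructor
    · rintro ⟨h1, p, hp1, hpx⟩
      refine ⟨h1, ?_⟩
      obtain ⟨q, rfl⟩ : ∃ q, p = q + 1 := ⟨p - 1, by omega⟩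
      have hy : shift^[k] (addCA^[q] x) = addCA^[q] x := addCA_iter_fixed k q x h1
      have : x = addCA (addCA^[q] x) := by
        conv_lhs => rw [← hpx]
        rw [Function.iterate_succ_apply']
      rw [this]
      exact sum_addCA k _ ((mem_S_iff k _).1 hy)
    · rintro ⟨h1, h2⟩
      refine ⟨h1, ?_⟩
      have hxT : x ∈ T := ⟨h1, h2⟩
      have hmem : ∀ n, addCA^[n] x ∈ T := fun n => hmaps.iterate n hxT
      have : Finite T := hTfin.to_subtype
      obtain ⟨a, b, hne, heq⟩ :=
        Finite.exists_ne_map_eq_of_infinite (fun n : ℕ => (⟨addCA^[n] x, hmem n⟩ : T))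
      wlog hab : a < b generalizing a b
      · exact this b a hne.symm heq.symm (by omega)
      have heq' : addCA^[a] x = addCA^[b] x := congrArg Subtype.val heq
      refine ⟨b - a, by omega, ?_⟩
      have hinjit := hinj.iterate hmaps a
      have hkey : addCA^[a] (addCA^[b - a] x) = addCA^[a] x := by
        rw [← Function.iterate_add_apply]
        rw [show a + (b - a) = b by omega]
        exact heq'.symm
      exact hinjit (hmem (b - a)) hxT hkey
  rw [hset]
  -- count T via the bijection with U
  have e1 : T ≃ U := hbij.equiv
  obtain ⟨m, rfl⟩ : ∃ m, k = m + 1 := ⟨k - 1, by omega⟩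
  have e2 : U ≃ (Fin m → ZMod 2) :=
    { toFun := fun y j => y.1 j.castSucc
      invFun := fun v => ⟨Fin.snoc v (∑ j, v j), by
        show ∑ i, Fin.snoc v (∑ j, v j) i = 0
        rw [Fin.sum_univ_castSucc]
        simp only [Fin.snoc_castSucc, Fin.snoc_last]
        exact zmod2_add_self _⟩
      left_inv := by
        rintro ⟨y, hy⟩
        apply Subtype.ext
        funext i
        induction i using Fin.lastCases with
        | last =>
          dsimp only
          rw [Fin.snoc_last]
          have hy' : (∑ j : Fin m, y j.castSucc) + y (Fin.last m) = 0 := by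
            rw [← Fin.sum_univ_castSucc]
            exact hy
          exact zmod2_eq_of_add _ _ hy'
        | cast j =>
          dsimp only
          rw [Fin.snoc_castSucc]
      right_inv := by
        intro v
        funext j
        dsimp only
        rw [Fin.snoc_castSucc] }
  rw [show (m + 1) - 1 = m by omega]
  calc T.ncard = Nat.card T := (Nat.card_coe_set_eq T).symm
    _ = Nat.card U := Nat.card_congr e1
    _ = Nat.card (Fin m → ZMod 2) := Nat.card_congr e2
    _ = 2 ^ m := by
        simp [Nat.card_eq_fintype_card]
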